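/- Let N ≥ 1, let S be an invertible 2N×2N complex matrix, and set T = S⁻¹·Sᴴ, where Sᴴ denotes the conjugate transpose of S. Then for every λ ∈ ℂ with λ ≠ 0, the multiplicity of λ as a root of the characteristic polynomial of T equals the multiplicity of 1/conj(λ) as a root of the characteristic polynomial of T. In particular, if λ ≠ 0 is an eigenvalue of T with algebraic multiplicity μ, then so is 1/conj(λ). -/

import Mathlib

open Matrix Polynomial

section Aux

variable {n : Type*} [Fintype n] [DecidableEq n]

private lemma eval_charpoly_aux (M : Matrix n n ℂ) (x : ℂ) :
    M.charpoly.eval x = (x • (1 : Matrix n n ℂ) - M).det := by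
  rw [Matrix.charpoly, _root_.eval_det, matPolyEquiv_charmatrix]
  congr 1
  simp [smul_one_eq_diagonal]

private lemma charpoly_transpose_aux (M : Matrix n n ℂ) : Mᵀ.charpoly = M.charpoly := by
  rw [Matrix.charpoly, Matrix.charpoly, ← Matrix.det_transpose (charmatrix M)]
  congr 1
  ext i j
  by_cases h : i = j <;>
    simp [charmatrix_apply, Matrix.diagonal_apply, h, Ne.symm, transpose_apply]

private lemma charpoly_conjTranspose_aux (M : Matrix n n ℂ) :
    Mᴴ.charpoly = M.charpoly.map (starRingEnd ℂ) := by
  have : Mᴴ = (M.map (starRingEnd ℂ))ᵀ := by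
    ext i j; simp [conjTranspose_apply]
  rw [this, charpoly_transpose_aux, Matrix.charpoly_map]

private lemma charpoly_similar_aux (P A : Matrix n n ℂ) (hP : IsUnit P.det) :
    (P⁻¹ * A * P).charpoly = A.charpoly := by
  classical
  set f : Matrix n n ℂ →+* Matrix n n ℂ[X] := (Polynomial.C : ℂ →+* ℂ[X]).mapMatrix with hf
  have h1 : f P⁻¹ * f P = 1 := by
    rw [← _root_.map_mul, nonsing_inv_mul P hP, _root_.map_one f]
  have hsmul : ∀ B : Matrix n n ℂ[X],
      f P⁻¹ * ((X : ℂ[X]) • B) * f P = (X : ℂ[X]) • (f P⁻¹ * B * f P) := by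
    intro B; simp [Matrix.mul_smul, Matrix.smul_mul]
  have hscalar : (Matrix.scalar n (X : ℂ[X])) = (X : ℂ[X]) • (1 : Matrix n n ℂ[X]) := by
    simp [smul_one_eq_diagonal, Matrix.scalar]
  have key : charmatrix (P⁻¹ * A * P) = f P⁻¹ * charmatrix A * f P := by
    rw [charmatrix, charmatrix, Matrix.mul_sub, Matrix.sub_mul, hscalar, hsmul]
    congr 1
    · rw [mul_one, h1]
    · rw [hf]
      simp [_root_.map_mul]
  rw [Matrix.charpoly, Matrix.charpoly, key, det_mul, det_mul]
  have : (f P⁻¹).det * (f P).det = 1 := by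
    rw [← det_mul, h1, det_one]
  calc (f P⁻¹).det * (charmatrix A).det * (f P).det
      = (charmatrix A).det * ((f P⁻¹).det * (f P).det) := by ring
    _ = (charmatrix A).det := by rw [this, mul_one]

private lemma roots_charpoly_inv_aux (T : Matrix n n ℂ) (hT : IsUnit T.det) :
    (T⁻¹).charpoly.roots = T.charpoly.roots.map (·⁻¹) := by
  classical
  set p := T.charpoly with hp
  set M := p.roots with hM
  have hmonic : p.Monic := T.charpoly_monic
  have hcard : M.card = p.natDegree :=
    (Polynomial.splits_iff_card_roots).mp (IsAlgClosed.splits p)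
  have hfact : (M.map fun a => X - C a).prod = p :=
    prod_multiset_X_sub_C_of_monic_of_roots_card_eq hmonic hcard
  have hcardn : M.card = Fintype.card n := by
    rw [hcard, hp, Matrix.charpoly_natDegree_eq_dim]
  have hdetne : T.det ≠ 0 := by
    intro h; rw [h] at hT; exact (by simpa using hT : IsUnit (0:ℂ)).ne_zero rfl
  have heval0 : p.eval 0 = (-1 : ℂ) ^ Fintype.card n * T.det := by
    rw [eval_charpoly_aux]
    simp [Matrix.det_neg]
  have hMne : ∀ r ∈ M, r ≠ 0 := by
    intro r hr h0
    subst h0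
    have : p.eval 0 = 0 := by
      rw [← hfact, eval_multiset_prod]
      refine Multiset.prod_eq_zero ?_
      refine Multiset.mem_map.mpr ⟨X - C 0, Multiset.mem_map_of_mem _ hr, ?_⟩
      simp
    rw [heval0] at this
    simp at this
    exact hdetne this
  have hdetprod : T.det = M.prod := by
    have h2 : p.eval 0 = (-1 : ℂ) ^ Fintype.card n * M.prod := by
      rw [← hfact, eval_multiset_prod, Multiset.map_map]
      have : (M.map fun a => (0 : ℂ) - a) = M.map fun a => -a := by
        simp
      simp only [Function.comp, eval_sub, eval_X, eval_C]
      rw [this]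
      rw [Multiset.prod_map_neg, hcardn]
    have h3 := heval0.symm.trans h2
    have hne : ((-1 : ℂ) ^ Fintype.card n) ≠ 0 := by simp
    exact mul_left_cancel₀ hne h3
  set q := ((M.map (·⁻¹)).map fun a => X - C a).prod with hq
  have hmain : (T⁻¹).charpoly = q := by
    apply Polynomial.eq_of_infinite_eval_eq
    apply Set.Infinite.mono (s := ({0}ᶜ : Set ℂ))
    swap
    · exact Set.Finite.infinite_compl (Set.finite_singleton 0)
    intro x hx
    have hxne : x ≠ 0 := hx
    show (T⁻¹).charpoly.eval x = q.eval x
    have lhs1 : (T⁻¹).charpoly.eval x = (x • (1 : Matrix n n ℂ) - T⁻¹).det :=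
      eval_charpoly_aux _ _
    have lhs2 : x • (1 : Matrix n n ℂ) - T⁻¹ = T⁻¹ * (x • T - 1) := by
      rw [Matrix.mul_sub, Matrix.mul_smul, nonsing_inv_mul T hT, mul_one]
    have lhs3 : x • T - (1 : Matrix n n ℂ) = x • (T - x⁻¹ • 1) := by
      rw [smul_sub, smul_smul, mul_inv_cancel₀ hxne, one_smul]
    have lhs4 : T - x⁻¹ • (1 : Matrix n n ℂ) = -(x⁻¹ • 1 - T) := (neg_sub _ _).symm
    have hdetinv : (T⁻¹).det = (T.det)⁻¹ := by
      rw [Matrix.det_nonsing_inv, Ring.inverse_eq_inv']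
    have evalinv : p.eval x⁻¹ = (M.map fun r => x⁻¹ - r).prod := by
      rw [← hfact, eval_multiset_prod, Multiset.map_map]
      simp [Function.comp]
    have rhs1 : q.eval x = (M.map fun r => x - r⁻¹).prod := by
      rw [hq, eval_multiset_prod, Multiset.map_map, Multiset.map_map]
      simp [Function.comp]
    have rhs2 : (M.map fun r => x - r⁻¹).prod
        = (M.map fun r => r⁻¹ * (-x) * (x⁻¹ - r)).prod := by
      congr 1
      apply Multiset.map_congr rfl
      intro r hr
      have hrne := hMne r hr
      field_simp
      ring
    have rhs3 : (M.map fun r => r⁻¹ * (-x) * (x⁻¹ - r)).prod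
        = (M.prod)⁻¹ * (-x) ^ Fintype.card n * (M.map fun r => x⁻¹ - r).prod := by
      rw [Multiset.prod_map_mul, Multiset.prod_map_mul]
      rw [Multiset.prod_map_inv]
      congr 2
      · simp [Multiset.map_id']
      · rw [Multiset.map_const', Multiset.prod_replicate, hcardn]
    rw [lhs1, lhs2, det_mul, lhs3, Matrix.det_smul, lhs4, Matrix.det_neg,
      ← eval_charpoly_aux, ← hp, evalinv, hdetinv, hdetprod,
      rhs1, rhs2, rhs3, neg_pow]
    ring
  rw [hmain, hq, Polynomial.roots_multiset_prod_X_sub_C]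

end Aux

open Matrix in
/-- For an invertible `2N×2N` complex matrix `S` and `T = S⁻¹ Sᴴ`, the algebraic multiplicity of
any nonzero `λ` as a root of the characteristic polynomial of `T` equals that of `1/conj(λ)`. -/
theorem stmt_7 (N : ℕ) (hN : 1 ≤ N) (S : Matrix (Fin (2 * N)) (Fin (2 * N)) ℂ)
    (hS : IsUnit S.det) (lam : ℂ) (hlam : lam ≠ 0) :
    (S⁻¹ * Sᴴ).charpoly.rootMultiplicity lam =
      (S⁻¹ * Sᴴ).charpoly.rootMultiplicity ((starRingEnd ℂ) lam)⁻¹ := by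
  classical
  set T := S⁻¹ * Sᴴ with hTdef
  have hSdet : S.det ≠ 0 := by
    intro h; rw [h] at hS; exact (by simpa using hS : IsUnit (0:ℂ)).ne_zero rfl
  have hSH : IsUnit Sᴴ.det := by
    rw [Matrix.det_conjTranspose]
    simpa [isUnit_iff_ne_zero] using hSdet
  have hSinv : IsUnit S⁻¹.det := by
    rw [Matrix.det_nonsing_inv, Ring.inverse_eq_inv']
    simpa [isUnit_iff_ne_zero] using inv_ne_zero hSdet
  have hT : IsUnit T.det := by
    rw [hTdef, det_mul]
    exact hSinv.mul hSH
  have hTH : Tᴴ = S * (Sᴴ)⁻¹ := by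
    rw [hTdef, conjTranspose_mul, conjTranspose_conjTranspose, conjTranspose_nonsing_inv]
  have hTinv : T⁻¹ = (Sᴴ)⁻¹ * S := by
    rw [hTdef, Matrix.mul_inv_rev, nonsing_inv_nonsing_inv S hS]
  have hsim : S⁻¹ * Tᴴ * S = T⁻¹ := by
    rw [hTH, hTinv, ← Matrix.mul_assoc S⁻¹ S, nonsing_inv_mul S hS, one_mul]
  -- step 1: conjugate
  have e1 : T.charpoly.rootMultiplicity lam
      = (Tᴴ).charpoly.rootMultiplicity ((starRingEnd ℂ) lam) := by
    rw [charpoly_conjTranspose_aux]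
    exact Polynomial.eq_rootMultiplicity_map (RingHom.injective _) lam
  -- step 2: similarity
  have e2 : (Tᴴ).charpoly = (T⁻¹).charpoly := by
    rw [← hsim, charpoly_similar_aux S Tᴴ hS]
  -- step 3: inverse
  have e3 : (T⁻¹).charpoly.rootMultiplicity ((starRingEnd ℂ) lam)
      = T.charpoly.rootMultiplicity ((starRingEnd ℂ) lam)⁻¹ := by
    rw [← Polynomial.count_roots, ← Polynomial.count_roots, roots_charpoly_inv_aux T hT]
    have := Multiset.count_map_eq_count' (fun x : ℂ => x⁻¹) T.charpoly.roots
      inv_injective ((starRingEnd ℂ) lam)⁻¹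
    simpa using this
  rw [e1, e2, e3]
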